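/- There exists a constant C > 0, depending only on T, ā, λ, α, β and the C²-norms of a, f and K (but not on ε), such that for every ε ∈ (0,1], every solution v ∈ C²([0,T]) of the SPFIDE satisfies |v'(ξ)| ≤ C (1 + ε⁻¹ e^{−ā ξ/ε}) for all ξ ∈ [0,T]. -/

import Mathlib

open Set Filter MeasureTheory intervalIntegral Real Topology

/-- Extend a bound from the open interval to the closed one by continuity. -/
lemma spfide_closure_abs_bound {T c : ℝ} (hT : 0 < T) {h : ℝ → ℝ}
    (hc : ContinuousOn h (Icc 0 T)) (hb : ∀ t ∈ Ioo 0 T, |h t| ≤ c) :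
    ∀ t ∈ Icc 0 T, |h t| ≤ c := by
  intro t ht
  have hcl : t ∈ closure (Ioo (0:ℝ) T) := by
    rw [closure_Ioo hT.ne]; exact ht
  have h1 : ContinuousWithinAt h (Ioo 0 T) t :=
    (hc t ht).mono Ioo_subset_Icc_self
  have hne : (𝓝[Ioo (0:ℝ) T] t).NeBot := mem_closure_iff_nhdsWithin_neBot.mp hcl
  exact le_of_tendsto h1.abs (eventually_nhdsWithin_of_forall hb)

/-- A minimum principle: if `ε w'' + a w' < 0` in the interior and `w ≥ 0`
at the endpoints, then `w ≥ 0` everywhere. -/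
lemma spfide_min_principle {T ε : ℝ} (hT : 0 < T) (hε : 0 < ε)
    {a w w' w'' : ℝ → ℝ}
    (hw : ∀ t ∈ Icc 0 T, HasDerivWithinAt w (w' t) (Icc 0 T) t)
    (hw' : ∀ t ∈ Icc 0 T, HasDerivWithinAt w' (w'' t) (Icc 0 T) t)
    (hL : ∀ t ∈ Ioo 0 T, ε * w'' t + a t * w' t < 0)
    (h0 : 0 ≤ w 0) (hTb : 0 ≤ w T) :
    ∀ t ∈ Icc 0 T, 0 ≤ w t := by
  have hwc : ContinuousOn w (Icc 0 T) := fun t ht => (hw t ht).continuousWithinAt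
  have hw'c : ContinuousOn w' (Icc 0 T) := fun t ht => (hw' t ht).continuousWithinAt
  obtain ⟨ξ0, hξ0, hmin⟩ := isCompact_Icc.exists_isMinOn
    (nonempty_Icc.mpr hT.le) hwc
  rcases eq_or_lt_of_le hξ0.1 with h0l | h0l
  · intro t ht
    have := hmin ht
    simp only at this
    calc (0:ℝ) ≤ w 0 := h0
    _ = w ξ0 := by rw [h0l]
    _ ≤ w t := this
  rcases eq_or_lt_of_le hξ0.2 with hTl | hTl
  · intro t ht
    have := hmin ht
    calc (0:ℝ) ≤ w T := hTb
    _ = w ξ0 := by rw [hTl]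
    _ ≤ w t := this
  -- interior minimum: contradiction
  exfalso
  have hIoo : ξ0 ∈ Ioo (0:ℝ) T := ⟨h0l, hTl⟩
  have hnhds : Icc (0:ℝ) T ∈ 𝓝 ξ0 := Icc_mem_nhds h0l hTl
  have hdw : HasDerivAt w (w' ξ0) ξ0 := (hw ξ0 hξ0).hasDerivAt hnhds
  have hdw' : HasDerivAt w' (w'' ξ0) ξ0 := (hw' ξ0 hξ0).hasDerivAt hnhds
  have hw'0 : w' ξ0 = 0 := (hmin.isLocalMin hnhds).hasDerivAt_eq_zero hdw
  have hw''0 : 0 ≤ w'' ξ0 := by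
    by_contra hneg
    push_neg at hneg
    -- slope of w' tends to w'' ξ0 < 0, so w' < 0 just to the right of ξ0
    have hslope : Tendsto (slope w' ξ0) (𝓝[≠] ξ0) (𝓝 (w'' ξ0)) :=
      hasDerivAt_iff_tendsto_slope.mp hdw'
    have hev : ∀ᶠ z in 𝓝[>] ξ0, slope w' ξ0 z < 0 :=
      (hslope.mono_left (nhdsWithin_mono _ (fun z hz => ne_of_gt hz))).eventually_lt_const hneg
    obtain ⟨u, hu, hIoosub⟩ := mem_nhdsGT_iff_exists_Ioo_subset.mp hev
    have hw'neg : ∀ c ∈ Ioo ξ0 (min u T), w' c < 0 := by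
      intro c hc
      have hcu : c ∈ Ioo ξ0 u := ⟨hc.1, lt_of_lt_of_le hc.2 (min_le_left _ _)⟩
      have hst : slope w' ξ0 c < 0 := hIoosub hcu
      have hslope_eq : slope w' ξ0 c = (w' c - w' ξ0) / (c - ξ0) := by
        simp [slope, div_eq_inv_mul]
      rw [hslope_eq, hw'0, sub_zero] at hst
      have hcpos : 0 < c - ξ0 := sub_pos.mpr hc.1
      exact div_neg_iff.mp hst |>.elim (fun h => by linarith [h.1]) (fun h => by linarith [hcpos, h.2])
    -- pick t strictly between ξ0 and min u T
    set t := (ξ0 + min u T) / 2 with ht_def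
    have hξ0t : ξ0 < t := by
      have : ξ0 < min u T := lt_min hu hTl
      simp only [ht_def]; linarith
    have htlt : t < min u T := by
      have : ξ0 < min u T := lt_min hu hTl
      simp only [ht_def]; linarith
    have htT : t < T := lt_of_lt_of_le htlt (min_le_right _ _)
    have htIcc : t ∈ Icc (0:ℝ) T := ⟨le_of_lt (lt_of_le_of_lt hξ0.1 hξ0t), htT.le⟩
    -- MVT on [ξ0, t]
    obtain ⟨c, hc, hceq⟩ := exists_hasDerivAt_eq_slope w w' hξ0t
      (hwc.mono (Icc_subset_Icc hξ0.1 htT.le))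
      (fun x hx => (hw x ⟨le_of_lt (lt_of_le_of_lt hξ0.1 hx.1),
        le_of_lt (lt_trans hx.2 htT)⟩).hasDerivAt
        (Icc_mem_nhds (lt_of_le_of_lt hξ0.1 hx.1) (lt_trans hx.2 htT)))
    have hcneg : w' c < 0 := hw'neg c ⟨hc.1, lt_trans hc.2 htlt⟩
    rw [hceq] at hcneg
    have htpos : 0 < t - ξ0 := sub_pos.mpr hξ0t
    have hwt : w t < w ξ0 := by
      have := (div_neg_iff.mp hcneg)
      rcases this with ⟨h1, h2⟩ | ⟨h1, h2⟩
      · linarith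
      · linarith
    exact absurd (hmin htIcc) (by simpa using not_le.mpr hwt)
  have := hL ξ0 hIoo
  rw [hw'0] at this
  nlinarith [mul_nonneg hε.le hw''0]

set_option maxHeartbeats 1000000 in
/-- ε-uniform layer bound `|v'(ξ)| ≤ C (1 + ε⁻¹ e^{−ā ξ/ε})` for
solutions of the singularly perturbed Fredholm integro-differential equation. -/
theorem spfide_first_deriv_bound
    (T abar lam alpha beta : ℝ) (a f : ℝ → ℝ) (K : ℝ → ℝ → ℝ)
    (hT : 0 < T) (habar : 0 < abar)
    (ha : ContDiffOn ℝ 2 a (Set.Icc 0 T))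
    (hf : ContDiffOn ℝ 2 f (Set.Icc 0 T))
    (hK : ContDiffOn ℝ 2 (Function.uncurry K) ((Set.Icc 0 T) ×ˢ (Set.Icc 0 T)))
    (hage : ∀ ξ ∈ Set.Icc 0 T, abar ≤ a ξ)
    (hlam : |lam| < abar /
      (sSup ((fun ξ => ∫ η in (0:ℝ)..T, |K ξ η|) '' Set.Icc 0 T) * T)) :
    ∃ C : ℝ, 0 < C ∧ ∀ ε : ℝ, 0 < ε → ε ≤ 1 →
      ∀ v v' v'' : ℝ → ℝ,
        (∀ ξ ∈ Set.Icc 0 T, HasDerivWithinAt v (v' ξ) (Set.Icc 0 T) ξ) →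
        (∀ ξ ∈ Set.Icc 0 T, HasDerivWithinAt v' (v'' ξ) (Set.Icc 0 T) ξ) →
        ContinuousOn v'' (Set.Icc 0 T) →
        (∀ ξ ∈ Set.Ioo 0 T,
          ε * v'' ξ + a ξ * v' ξ = f ξ + lam * ∫ η in (0:ℝ)..T, K ξ η * v η) →
        v 0 = alpha → v T = beta →
        ∀ ξ ∈ Set.Icc 0 T,
          |v' ξ| ≤ C * (1 + ε⁻¹ * Real.exp (-(abar * ξ) / ε)) := by
  -- Basic continuity facts
  have haC : ContinuousOn a (Icc 0 T) := ha.continuousOn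
  have hfC : ContinuousOn f (Icc 0 T) := hf.continuousOn
  have hKC : ContinuousOn (Function.uncurry K) (Icc 0 T ×ˢ Icc 0 T) := hK.continuousOn
  have hIccuIcc : uIcc (0:ℝ) T = Icc 0 T := uIcc_of_le hT.le
  have hunique : UniqueDiffOn ℝ (Icc (0:ℝ) T) := uniqueDiffOn_Icc hT
  obtain ⟨a', ha'def⟩ : ∃ g : ℝ → ℝ, g = derivWithin a (Icc 0 T) := ⟨_, rfl⟩
  have ha'C : ContinuousOn a' (Icc 0 T) := by
    rw [ha'def]; exact ha.continuousOn_derivWithin hunique (by norm_num)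
  have hada : ∀ t ∈ Ioo (0:ℝ) T, HasDerivAt a (a' t) t := by
    intro t ht
    have h1 : DifferentiableWithinAt ℝ a (Icc 0 T) t :=
      (ha.differentiableOn (by norm_num)) t (Ioo_subset_Icc_self ht)
    rw [ha'def]
    exact h1.hasDerivWithinAt.hasDerivAt (Icc_mem_nhds ht.1 ht.2)
  have hne : (Icc (0:ℝ) T).Nonempty := nonempty_Icc.mpr hT.le
  -- sup bounds on a, f, a'
  obtain ⟨xf, hxf, hMfmax⟩ := isCompact_Icc.exists_isMaxOn hne hfC.abs
  obtain ⟨Mf, hMfdef⟩ : ∃ x : ℝ, x = |f xf| := ⟨_, rfl⟩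
  have hMf' : ∀ t ∈ Icc (0:ℝ) T, |f t| ≤ Mf := by
    rw [hMfdef]; exact fun t ht => isMaxOn_iff.mp hMfmax t ht
  have hMf0 : 0 ≤ Mf := hMfdef ▸ abs_nonneg _
  obtain ⟨xa, hxa, hMamax⟩ := isCompact_Icc.exists_isMaxOn hne haC.abs
  obtain ⟨Ma, hMadef⟩ : ∃ x : ℝ, x = |a xa| := ⟨_, rfl⟩
  have hMa' : ∀ t ∈ Icc (0:ℝ) T, |a t| ≤ Ma := by
    rw [hMadef]; exact fun t ht => isMaxOn_iff.mp hMamax t ht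
  have hMa0 : 0 ≤ Ma := hMadef ▸ abs_nonneg _
  obtain ⟨xa', hxa', hMa'max⟩ := isCompact_Icc.exists_isMaxOn hne ha'C.abs
  obtain ⟨Ma', hMa'def⟩ : ∃ x : ℝ, x = |a' xa'| := ⟨_, rfl⟩
  have hMa'' : ∀ t ∈ Icc (0:ℝ) T, |a' t| ≤ Ma' := by
    rw [hMa'def]; exact fun t ht => isMaxOn_iff.mp hMa'max t ht
  have hMa'0 : 0 ≤ Ma' := hMa'def ▸ abs_nonneg _
  -- bound on K
  obtain ⟨pK, hpK, hBmax⟩ := (isCompact_Icc.prod isCompact_Icc).exists_isMaxOn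
    ⟨((0:ℝ), (0:ℝ)), ⟨left_mem_Icc.mpr hT.le, left_mem_Icc.mpr hT.le⟩⟩ hKC.abs
  obtain ⟨B, hBdef⟩ : ∃ x : ℝ, x = |Function.uncurry K pK| := ⟨_, rfl⟩
  have hKb : ∀ ξ ∈ Icc (0:ℝ) T, ∀ η ∈ Icc (0:ℝ) T, |K ξ η| ≤ B := by
    rw [hBdef]; exact fun ξ hξ η hη => isMaxOn_iff.mp hBmax (ξ, η) ⟨hξ, hη⟩
  -- slices of K are continuous / integrable
  have hKslice : ∀ ξ ∈ Icc (0:ℝ) T, ContinuousOn (fun η => K ξ η) (Icc 0 T) := by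
    intro ξ hξ
    have hc : Continuous (fun η : ℝ => (ξ, η)) := continuous_const.prodMk continuous_id
    exact hKC.comp hc.continuousOn (fun η hη => ⟨hξ, hη⟩)
  have hKint : ∀ ξ ∈ Icc (0:ℝ) T, IntervalIntegrable (fun η => |K ξ η|) volume 0 T := by
    intro ξ hξ
    apply ContinuousOn.intervalIntegrable
    rw [hIccuIcc]; exact (hKslice ξ hξ).abs
  obtain ⟨Kbar, hKbardef⟩ :
      ∃ x : ℝ, x = sSup ((fun ξ => ∫ η in (0:ℝ)..T, |K ξ η|) '' Set.Icc 0 T) := ⟨_, rfl⟩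
  rw [← hKbardef] at hlam
  have himgbdd : BddAbove ((fun ξ => ∫ η in (0:ℝ)..T, |K ξ η|) '' Set.Icc 0 T) := by
    refine ⟨B * T, ?_⟩
    rintro _ ⟨ξ, hξ, rfl⟩
    calc ∫ η in (0:ℝ)..T, |K ξ η| ≤ ∫ η in (0:ℝ)..T, B := by
          apply integral_mono_on hT.le (hKint ξ hξ) intervalIntegrable_const
          intro η hη; exact hKb ξ hξ η hη
      _ = B * T := by rw [intervalIntegral.integral_const, smul_eq_mul, sub_zero, mul_comm]
  have hKbar_ub : ∀ ξ ∈ Icc (0:ℝ) T, (∫ η in (0:ℝ)..T, |K ξ η|) ≤ Kbar := by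
    rw [hKbardef]
    exact fun ξ hξ => le_csSup himgbdd (mem_image_of_mem _ hξ)
  have hKbar0 : 0 ≤ Kbar :=
    le_trans (intervalIntegral.integral_nonneg hT.le (fun η _ => abs_nonneg _))
      (hKbar_ub 0 (left_mem_Icc.mpr hT.le))
  have hKT : 0 < Kbar * T := by
    by_contra hc
    push_neg at hc
    have h1 : abar / (Kbar * T) ≤ 0 := div_nonpos_of_nonneg_of_nonpos habar.le hc
    linarith [abs_nonneg lam]
  have hlam' : |lam| * (Kbar * T) < abar := (lt_div_iff₀ hKT).mp hlam
  -- the global constants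
  obtain ⟨D, hDdef⟩ : ∃ x : ℝ, x = abar - |lam| * Kbar * T := ⟨_, rfl⟩
  have hD : 0 < D := by rw [hDdef]; nlinarith
  obtain ⟨M₀, hM0def⟩ :
      ∃ x : ℝ, x = (abar * (|alpha| + |beta|) + (Mf + 1) * T) / D := ⟨_, rfl⟩
  have hM00 : 0 ≤ M₀ := by
    rw [hM0def]
    apply div_nonneg _ hD.le
    have h1 := abs_nonneg alpha
    have h2 := abs_nonneg beta
    nlinarith [hT.le, habar.le, hMf0]
  obtain ⟨MF, hMFdef⟩ : ∃ x : ℝ, x = Mf + |lam| * Kbar * M₀ := ⟨_, rfl⟩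
  have hMF0 : 0 ≤ MF := by
    rw [hMFdef]
    exact add_nonneg hMf0 (mul_nonneg (mul_nonneg (abs_nonneg lam) hKbar0) hM00)
  obtain ⟨C₃, hC3def⟩ :
      ∃ x : ℝ, x = |beta - alpha| / T + MF * T + (2 * Ma + Ma' * T) * M₀ := ⟨_, rfl⟩
  have hC30 : 0 ≤ C₃ := by
    rw [hC3def]
    have h1 : (0:ℝ) ≤ |beta - alpha| / T := div_nonneg (abs_nonneg _) hT.le
    have h2 : (0:ℝ) ≤ MF * T := mul_nonneg hMF0 hT.le
    have h3 : (0:ℝ) ≤ (2 * Ma + Ma' * T) * M₀ :=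
      mul_nonneg (by nlinarith [hMa0, hMa'0, hT.le]) hM00
    linarith
  refine ⟨C₃ + MF / abar + 1, by
    have := div_nonneg hMF0 habar.le
    linarith, ?_⟩
  intro ε hε hε1 v v' v'' hv hv' hv''C hpde hv0 hvT
  -- solution-dependent quantities
  have hvC : ContinuousOn v (Icc 0 T) := fun t ht => (hv t ht).continuousWithinAt
  have hv'C : ContinuousOn v' (Icc 0 T) := fun t ht => (hv' t ht).continuousWithinAt
  obtain ⟨xv, hxv, hMvmax⟩ := isCompact_Icc.exists_isMaxOn hne hvC.abs
  obtain ⟨Mv, hMvdef⟩ : ∃ x : ℝ, x = |v xv| := ⟨_, rfl⟩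
  have hMv' : ∀ t ∈ Icc (0:ℝ) T, |v t| ≤ Mv := by
    rw [hMvdef]; exact fun t ht => isMaxOn_iff.mp hMvmax t ht
  have hMv0 : 0 ≤ Mv := hMvdef ▸ abs_nonneg _
  -- bound on the right-hand side
  have hFb : ∀ ξ ∈ Icc (0:ℝ) T,
      |f ξ + lam * ∫ η in (0:ℝ)..T, K ξ η * v η| ≤ Mf + |lam| * Kbar * Mv := by
    intro ξ hξ
    have hint1 : IntervalIntegrable (fun η => K ξ η * v η) volume 0 T := by
      apply ContinuousOn.intervalIntegrable
      rw [hIccuIcc]; exact (hKslice ξ hξ).mul hvC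
    have h1 : |∫ η in (0:ℝ)..T, K ξ η * v η| ≤ ∫ η in (0:ℝ)..T, |K ξ η| * Mv := by
      refine le_trans (abs_integral_le_integral_abs hT.le) ?_
      apply integral_mono_on hT.le hint1.abs ((hKint ξ hξ).mul_const Mv)
      intro η hη
      rw [abs_mul]
      exact mul_le_mul_of_nonneg_left (hMv' η hη) (abs_nonneg _)
    have h2 : (∫ η in (0:ℝ)..T, |K ξ η| * Mv) = (∫ η in (0:ℝ)..T, |K ξ η|) * Mv :=
      intervalIntegral.integral_mul_const Mv _
    calc |f ξ + lam * ∫ η in (0:ℝ)..T, K ξ η * v η|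
        ≤ |f ξ| + |lam| * |∫ η in (0:ℝ)..T, K ξ η * v η| := by
          rw [← abs_mul]; exact abs_add_le _ _
      _ ≤ Mf + |lam| * (Kbar * Mv) := by
          refine add_le_add (hMf' ξ hξ) (mul_le_mul_of_nonneg_left ?_ (abs_nonneg lam))
          calc |∫ η in (0:ℝ)..T, K ξ η * v η| ≤ (∫ η in (0:ℝ)..T, |K ξ η|) * Mv := by
                rw [← h2]; exact h1
            _ ≤ Kbar * Mv := mul_le_mul_of_nonneg_right (hKbar_ub ξ hξ) hMv0
      _ = Mf + |lam| * Kbar * Mv := by ring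
  -- the combination Ft := ε v'' + a v'
  obtain ⟨Ft, hFtdef⟩ : ∃ g : ℝ → ℝ, g = fun t => ε * v'' t + a t * v' t := ⟨_, rfl⟩
  have hFtap : ∀ t, Ft t = ε * v'' t + a t * v' t := fun t => by rw [hFtdef]
  have hFtC : ContinuousOn Ft (Icc 0 T) := by
    rw [hFtdef]; exact (continuousOn_const.mul hv''C).add (haC.mul hv'C)
  have hFtIoo : ∀ t ∈ Ioo (0:ℝ) T, |Ft t| ≤ Mf + |lam| * Kbar * Mv := by
    intro t ht
    rw [hFtap t, hpde t ht]
    exact hFb t (Ioo_subset_Icc_self ht)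
  have hFtIcc : ∀ t ∈ Icc (0:ℝ) T, |Ft t| ≤ Mf + |lam| * Kbar * Mv :=
    spfide_closure_abs_bound hT hFtC hFtIoo
  -- barrier / maximum principle to bound Mv
  obtain ⟨C₁, hC1def⟩ : ∃ x : ℝ, x = (Mf + |lam| * Kbar * Mv + 1) / abar := ⟨_, rfl⟩
  have hC10 : 0 ≤ C₁ := by
    rw [hC1def]
    apply div_nonneg _ habar.le
    have := mul_nonneg (mul_nonneg (abs_nonneg lam) hKbar0) hMv0
    linarith
  have hψd : ∀ t : ℝ, HasDerivAt (fun t => |alpha| + |beta| + C₁ * (T - t)) (-C₁) t := by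
    intro t
    have h1 : HasDerivAt (fun t : ℝ => T - t) (-1) t := by
      simpa using (hasDerivAt_id t).const_sub T
    have h2 := (h1.const_mul C₁).const_add (|alpha| + |beta|)
    simpa using h2
  have hbarrier : ∀ s : ℝ, s = 1 ∨ s = -1 →
      ∀ t ∈ Icc (0:ℝ) T, 0 ≤ (|alpha| + |beta| + C₁ * (T - t)) + s * v t := by
    intro s hs
    have hsabs : ∀ x : ℝ, s * x ≤ |x| ∧ -|x| ≤ s * x := by
      intro x
      rcases hs with rfl | rfl
      · rw [one_mul]; exact ⟨le_abs_self x, neg_abs_le x⟩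
      · constructor
        · rw [neg_one_mul]; exact neg_le_abs x
        · rw [neg_one_mul]; exact neg_le_neg (le_abs_self x)
    refine spfide_min_principle hT hε (a := a)
      (w' := fun t => -C₁ + s * v' t) (w'' := fun t => s * v'' t) ?_ ?_ ?_ ?_ ?_
    · intro t ht
      exact ((hψd t).hasDerivWithinAt).add ((hv t ht).const_mul s)
    · intro t ht
      have := ((hv' t ht).const_mul s).const_add (-C₁)
      simpa using this
    · intro t ht
      have h1 : ε * (s * v'' t) + a t * (-C₁ + s * v' t) = s * Ft t - a t * C₁ := by
        rw [hFtap t]; ring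
      rw [h1]
      have h2 : s * Ft t ≤ Mf + |lam| * Kbar * Mv := by
        rcases hs with rfl | rfl
        · calc 1 * Ft t = Ft t := one_mul _
            _ ≤ |Ft t| := le_abs_self _
            _ ≤ _ := hFtIoo t ht
        · calc (-1) * Ft t = -Ft t := by ring
            _ ≤ |Ft t| := neg_le_abs _
            _ ≤ _ := hFtIoo t ht
      have h3 : abar * C₁ ≤ a t * C₁ :=
        mul_le_mul_of_nonneg_right (hage t (Ioo_subset_Icc_self ht)) hC10
      have h4 : abar * C₁ = Mf + |lam| * Kbar * Mv + 1 := by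
        rw [hC1def]; field_simp
      linarith
    · show 0 ≤ (|alpha| + |beta| + C₁ * (T - 0)) + s * v 0
      rw [hv0]
      have hC1T : 0 ≤ C₁ * (T - 0) := mul_nonneg hC10 (by linarith)
      linarith [(hsabs alpha).2, neg_abs_le alpha, abs_nonneg beta]
    · show 0 ≤ (|alpha| + |beta| + C₁ * (T - T)) + s * v T
      rw [hvT]
      linarith [(hsabs beta).2, neg_abs_le beta, abs_nonneg alpha]
  have hvψ : ∀ t ∈ Icc (0:ℝ) T, |v t| ≤ |alpha| + |beta| + C₁ * (T - t) := by
    intro t ht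
    have h1 := hbarrier 1 (Or.inl rfl) t ht
    have h2 := hbarrier (-1) (Or.inr rfl) t ht
    rw [abs_le]
    constructor
    · linarith [h2]
    · linarith [h1]
  have hMvb : Mv ≤ |alpha| + |beta| + C₁ * T := by
    have h1 := hvψ xv hxv
    have h2 : C₁ * (T - xv) ≤ C₁ * T := by
      apply mul_le_mul_of_nonneg_left _ hC10
      linarith [hxv.1]
    rw [hMvdef]
    linarith
  have hMvM0 : Mv ≤ M₀ := by
    rw [hM0def, le_div_iff₀ hD]
    have h2 : (Mv - (|alpha| + |beta|)) * abar ≤ (Mf + |lam| * Kbar * Mv + 1) * T := by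
      rw [← le_div_iff₀ habar]
      have h1 : C₁ * T = (Mf + |lam| * Kbar * Mv + 1) * T / abar := by
        rw [hC1def]; ring
      rw [h1] at hMvb
      linarith
    rw [hDdef]
    nlinarith
  have hFtM : ∀ t ∈ Icc (0:ℝ) T, |Ft t| ≤ MF := by
    intro t ht
    refine le_trans (hFtIcc t ht) ?_
    rw [hMFdef]
    have : |lam| * Kbar * Mv ≤ |lam| * Kbar * M₀ :=
      mul_le_mul_of_nonneg_left hMvM0 (mul_nonneg (abs_nonneg lam) hKbar0)
    linarith
  -- Step 2: bound on v' 0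
  obtain ⟨ξ1, hξ1, hslope⟩ := exists_hasDerivAt_eq_slope v v' hT hvC
    (fun x hx => (hv x (Ioo_subset_Icc_self hx)).hasDerivAt (Icc_mem_nhds hx.1 hx.2))
  have hv'ξ1 : v' ξ1 = (beta - alpha) / T := by
    rw [hslope, hvT, hv0, sub_zero]
  have hsub1 : Icc (0:ℝ) ξ1 ⊆ Icc 0 T := Icc_subset_Icc le_rfl hξ1.2.le
  have hsub1' : ∀ {t : ℝ}, t ∈ Ioo (0:ℝ) ξ1 → t ∈ Ioo (0:ℝ) T :=
    fun {t} ht => ⟨ht.1, lt_trans ht.2 hξ1.2⟩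
  have huIcc1 : uIcc (0:ℝ) ξ1 = Icc 0 ξ1 := uIcc_of_le hξ1.1.le
  have hv''int : IntervalIntegrable v'' volume 0 ξ1 := by
    apply ContinuousOn.intervalIntegrable
    rw [huIcc1]; exact hv''C.mono hsub1
  have hFTCv' : ∫ t in (0:ℝ)..ξ1, v'' t = v' ξ1 - v' 0 :=
    integral_eq_sub_of_hasDeriv_right_of_le hξ1.1.le (hv'C.mono hsub1)
      (fun t ht => (((hv' t (Ioo_subset_Icc_self (hsub1' ht))).hasDerivAt
        (Icc_mem_nhds (hsub1' ht).1 (hsub1' ht).2)).hasDerivWithinAt)) hv''int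
  have hintv' : IntervalIntegrable (fun t => a t * v' t) volume 0 ξ1 := by
    apply ContinuousOn.intervalIntegrable
    rw [huIcc1]; exact (haC.mul hv'C).mono hsub1
  have hinta'v : IntervalIntegrable (fun t => a' t * v t) volume 0 ξ1 := by
    apply ContinuousOn.intervalIntegrable
    rw [huIcc1]; exact (ha'C.mul hvC).mono hsub1
  have hFTCav : ∫ t in (0:ℝ)..ξ1, (a' t * v t + a t * v' t) = a ξ1 * v ξ1 - a 0 * v 0 :=
    integral_eq_sub_of_hasDeriv_right_of_le hξ1.1.le
      ((haC.mono hsub1).mul (hvC.mono hsub1))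
      (fun t ht => (((hada t (hsub1' ht)).mul
        ((hv t (Ioo_subset_Icc_self (hsub1' ht))).hasDerivAt
        (Icc_mem_nhds (hsub1' ht).1 (hsub1' ht).2))).hasDerivWithinAt))
      (hinta'v.add hintv')
  have hsplit : ∫ t in (0:ℝ)..ξ1, a t * v' t
      = a ξ1 * v ξ1 - a 0 * v 0 - ∫ t in (0:ℝ)..ξ1, a' t * v t := by
    rw [← hFTCav, integral_add hinta'v hintv']; ring
  have hεv''int : IntervalIntegrable (fun t => ε * v'' t) volume 0 ξ1 := hv''int.const_mul ε
  have hkey : ε * (v' ξ1 - v' 0)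
      = (∫ t in (0:ℝ)..ξ1, Ft t) - ∫ t in (0:ℝ)..ξ1, a t * v' t := by
    have h1 : ∫ t in (0:ℝ)..ξ1, Ft t
        = (∫ t in (0:ℝ)..ξ1, ε * v'' t) + ∫ t in (0:ℝ)..ξ1, a t * v' t := by
      rw [← integral_add hεv''int hintv']
      apply intervalIntegral.integral_congr
      intro t _; rw [hFtap t]
    have h2 : (∫ t in (0:ℝ)..ξ1, ε * v'' t) = ε * (v' ξ1 - v' 0) := by
      rw [intervalIntegral.integral_const_mul, hFTCv']
    rw [h1, h2]; ring
  have hb1 : |∫ t in (0:ℝ)..ξ1, Ft t| ≤ MF * T := by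
    have h0 : ∀ x ∈ Set.uIoc (0:ℝ) ξ1, ‖Ft x‖ ≤ MF := by
      intro x hx
      rw [uIoc_of_le hξ1.1.le] at hx
      rw [Real.norm_eq_abs]
      exact hFtM x ⟨hx.1.le, le_trans hx.2 hξ1.2.le⟩
    have h1 := intervalIntegral.norm_integral_le_of_norm_le_const h0
    rw [Real.norm_eq_abs] at h1
    calc |∫ t in (0:ℝ)..ξ1, Ft t| ≤ MF * |ξ1 - 0| := h1
      _ ≤ MF * T := by
          rw [sub_zero, abs_of_nonneg hξ1.1.le]
          exact mul_le_mul_of_nonneg_left hξ1.2.le hMF0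
  have hb2 : |∫ t in (0:ℝ)..ξ1, a' t * v t| ≤ Ma' * M₀ * T := by
    have h0 : ∀ x ∈ Set.uIoc (0:ℝ) ξ1, ‖a' x * v x‖ ≤ Ma' * M₀ := by
      intro x hx
      rw [uIoc_of_le hξ1.1.le] at hx
      have hxm : x ∈ Icc (0:ℝ) T := ⟨hx.1.le, le_trans hx.2 hξ1.2.le⟩
      rw [Real.norm_eq_abs, abs_mul]
      exact mul_le_mul (hMa'' x hxm) (le_trans (hMv' x hxm) hMvM0) (abs_nonneg _) hMa'0
    have h1 := intervalIntegral.norm_integral_le_of_norm_le_const h0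
    rw [Real.norm_eq_abs] at h1
    calc |∫ t in (0:ℝ)..ξ1, a' t * v t| ≤ Ma' * M₀ * |ξ1 - 0| := h1
      _ ≤ Ma' * M₀ * T := by
          rw [sub_zero, abs_of_nonneg hξ1.1.le]
          exact mul_le_mul_of_nonneg_left hξ1.2.le (mul_nonneg hMa'0 hM00)
  have hbpt : ∀ t ∈ Icc (0:ℝ) T, |a t * v t| ≤ Ma * M₀ := by
    intro t ht
    rw [abs_mul]
    exact mul_le_mul (hMa' t ht) (le_trans (hMv' t ht) hMvM0) (abs_nonneg _) hMa0
  have hv'0 : |v' 0| ≤ C₃ / ε := by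
    rw [le_div_iff₀ hε, mul_comm]
    have h6 : ε * v' 0 = ε * v' ξ1 - (∫ t in (0:ℝ)..ξ1, Ft t) + a ξ1 * v ξ1 - a 0 * v 0
        - ∫ t in (0:ℝ)..ξ1, a' t * v t := by
      rw [hsplit] at hkey; linarith only [hkey]
    have tri : ∀ x y : ℝ, |x - y| ≤ |x| + |y| := fun x y => abs_sub x y
    have h7 : |ε * v' 0| ≤ |ε * v' ξ1| + |∫ t in (0:ℝ)..ξ1, Ft t| + |a ξ1 * v ξ1|
        + |a 0 * v 0| + |∫ t in (0:ℝ)..ξ1, a' t * v t| := by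
      rw [h6]
      calc |ε * v' ξ1 - (∫ t in (0:ℝ)..ξ1, Ft t) + a ξ1 * v ξ1 - a 0 * v 0
          - ∫ t in (0:ℝ)..ξ1, a' t * v t|
          ≤ |ε * v' ξ1 - (∫ t in (0:ℝ)..ξ1, Ft t) + a ξ1 * v ξ1 - a 0 * v 0|
            + |∫ t in (0:ℝ)..ξ1, a' t * v t| := tri _ _
        _ ≤ (|ε * v' ξ1 - (∫ t in (0:ℝ)..ξ1, Ft t) + a ξ1 * v ξ1| + |a 0 * v 0|)
            + |∫ t in (0:ℝ)..ξ1, a' t * v t| := by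
              have := tri (ε * v' ξ1 - (∫ t in (0:ℝ)..ξ1, Ft t) + a ξ1 * v ξ1) (a 0 * v 0)
              linarith only [this]
        _ ≤ ((|ε * v' ξ1 - (∫ t in (0:ℝ)..ξ1, Ft t)| + |a ξ1 * v ξ1|) + |a 0 * v 0|)
            + |∫ t in (0:ℝ)..ξ1, a' t * v t| := by
              have := abs_add_le (ε * v' ξ1 - (∫ t in (0:ℝ)..ξ1, Ft t)) (a ξ1 * v ξ1)
              linarith only [this]
        _ ≤ (((|ε * v' ξ1| + |∫ t in (0:ℝ)..ξ1, Ft t|) + |a ξ1 * v ξ1|) + |a 0 * v 0|)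
            + |∫ t in (0:ℝ)..ξ1, a' t * v t| := by
              have := tri (ε * v' ξ1) (∫ t in (0:ℝ)..ξ1, Ft t)
              linarith only [this]
        _ = _ := by ring
    have h8 : |ε * v' ξ1| ≤ |beta - alpha| / T := by
      rw [abs_mul, abs_of_pos hε, hv'ξ1, abs_div, abs_of_pos hT]
      calc ε * (|beta - alpha| / T) ≤ 1 * (|beta - alpha| / T) :=
            mul_le_mul_of_nonneg_right hε1 (div_nonneg (abs_nonneg _) hT.le)
        _ = |beta - alpha| / T := one_mul _
    have h9 : |ε * v' 0| = ε * |v' 0| := by rw [abs_mul, abs_of_pos hε]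
    rw [← h9, hC3def]
    have hb3 := hbpt ξ1 (hsub1 ⟨hξ1.1.le, le_rfl⟩)
    have hb4 := hbpt 0 (left_mem_Icc.mpr hT.le)
    have hexp2 : (2 * Ma + Ma' * T) * M₀ = Ma * M₀ + Ma * M₀ + Ma' * M₀ * T := by ring
    linarith only [h7, h8, hb1, hb2, hb3, hb4, hexp2]
  -- Step 3: Duhamel representation for v'
  have haint : ∀ t1 ∈ Icc (0:ℝ) T, ∀ t2 ∈ Icc (0:ℝ) T, IntervalIntegrable a volume t1 t2 := by
    intro t1 h1 t2 h2
    apply ContinuousOn.intervalIntegrable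
    exact haC.mono (uIcc_subset_Icc h1 h2)
  have h0mem : (0:ℝ) ∈ Icc (0:ℝ) T := left_mem_Icc.mpr hT.le
  obtain ⟨A, hAdef⟩ : ∃ g : ℝ → ℝ, g = fun t => ∫ s in (0:ℝ)..t, a s := ⟨_, rfl⟩
  have hAap : ∀ t, A t = ∫ s in (0:ℝ)..t, a s := fun t => by rw [hAdef]
  have hacontAt : ∀ x ∈ Ioo (0:ℝ) T, ContinuousAt a x :=
    fun x hx => haC.continuousAt (Icc_mem_nhds hx.1 hx.2)
  have hsm := ContinuousAt.stronglyMeasurableAtFilter (μ := volume) isOpen_Ioo hacontAt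
  have hAd : ∀ t ∈ Ioo (0:ℝ) T, HasDerivAt A (a t) t := by
    intro t ht
    rw [hAdef]
    exact intervalIntegral.integral_hasDerivAt_right
      (haint 0 h0mem t (Ioo_subset_Icc_self ht)) (hsm t ht) (hacontAt t ht)
  have hAC : ContinuousOn A (Icc 0 T) := by
    rw [hAdef]
    have h1 : IntegrableOn a (uIcc (0:ℝ) T) volume := by
      rw [hIccuIcc]; exact haC.integrableOn_compact isCompact_Icc
    have h2 := intervalIntegral.continuousOn_primitive_interval h1
    rwa [hIccuIcc] at h2
  have hA_lb : ∀ t1 ∈ Icc (0:ℝ) T, ∀ t2 ∈ Icc (0:ℝ) T, t1 ≤ t2 →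
      abar * (t2 - t1) ≤ A t2 - A t1 := by
    intro t1 h1 t2 h2 h12
    have hadd : A t1 + ∫ s in t1..t2, a s = A t2 := by
      rw [hAap, hAap]
      exact integral_add_adjacent_intervals (haint 0 h0mem t1 h1) (haint t1 h1 t2 h2)
    have hmono : abar * (t2 - t1) ≤ ∫ s in t1..t2, a s := by
      have h3 := integral_mono_on h12 intervalIntegrable_const (haint t1 h1 t2 h2)
        (fun s hs => hage s ⟨le_trans h1.1 hs.1, le_trans hs.2 h2.2⟩)
      rwa [intervalIntegral.integral_const, smul_eq_mul, mul_comm] at h3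
    linarith only [hadd, hmono]
  have hA0 : A 0 = 0 := by rw [hAap]; simp
  -- the layer estimate
  intro ξ hξ
  obtain ⟨G, hGdef⟩ : ∃ g : ℝ → ℝ, g = fun t => v' t * exp (A t / ε) := ⟨_, rfl⟩
  obtain ⟨g, hgdef⟩ : ∃ g0 : ℝ → ℝ, g0 = fun t => (Ft t / ε) * exp (A t / ε) := ⟨_, rfl⟩
  have hGap : ∀ t, G t = v' t * exp (A t / ε) := fun t => by rw [hGdef]
  have hgap : ∀ t, g t = (Ft t / ε) * exp (A t / ε) := fun t => by rw [hgdef]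
  have hexpC : ContinuousOn (fun t => exp (A t / ε)) (Icc (0:ℝ) T) :=
    Real.continuous_exp.comp_continuousOn (hAC.div_const ε)
  have hGC : ContinuousOn G (Icc 0 T) := by rw [hGdef]; exact hv'C.mul hexpC
  have hgC : ContinuousOn g (Icc 0 T) := by rw [hgdef]; exact (hFtC.div_const ε).mul hexpC
  have hGd : ∀ t ∈ Ioo (0:ℝ) T, HasDerivAt G (g t) t := by
    intro t ht
    have h1 : HasDerivAt (fun u => exp (A u / ε)) (a t / ε * exp (A t / ε)) t := by
      have h2 := ((hAd t ht).div_const ε).exp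
      simpa [mul_comm] using h2
    have h2 : HasDerivAt v' (v'' t) t :=
      (hv' t (Ioo_subset_Icc_self ht)).hasDerivAt (Icc_mem_nhds ht.1 ht.2)
    have h3 : HasDerivAt (fun u => v' u * exp (A u / ε)) _ t := h2.mul h1
    rw [hGdef]
    convert h3 using 1
    rw [hgap t, hFtap t]
    field_simp
  have hsubξ : Icc (0:ℝ) ξ ⊆ Icc 0 T := Icc_subset_Icc le_rfl hξ.2
  have hsubξ' : ∀ {t : ℝ}, t ∈ Ioo (0:ℝ) ξ → t ∈ Ioo (0:ℝ) T :=
    fun {t} ht => ⟨ht.1, lt_of_lt_of_le ht.2 hξ.2⟩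
  have hgint : IntervalIntegrable g volume 0 ξ := by
    apply ContinuousOn.intervalIntegrable
    rw [uIcc_of_le hξ.1]; exact hgC.mono hsubξ
  have hFTCG : ∫ t in (0:ℝ)..ξ, g t = G ξ - G 0 :=
    integral_eq_sub_of_hasDeriv_right_of_le hξ.1 (hGC.mono hsubξ)
      (fun t ht => (hGd t (hsubξ' ht)).hasDerivWithinAt) hgint
  have hG0 : G 0 = v' 0 := by rw [hGap, hA0]; simp
  have hGξ : v' ξ * exp (A ξ / ε) = v' 0 + ∫ t in (0:ℝ)..ξ, g t := by
    have h1 := hFTCG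
    rw [hG0, hGap ξ] at h1
    linarith only [h1]
  have hexppos : (0:ℝ) < exp (A ξ / ε) := exp_pos _
  have habs1 : |v' ξ| ≤ (|v' 0| + |∫ t in (0:ℝ)..ξ, g t|) / exp (A ξ / ε) := by
    rw [le_div_iff₀ hexppos]
    calc |v' ξ| * exp (A ξ / ε) = |v' ξ * exp (A ξ / ε)| := by
          rw [abs_mul, abs_of_pos hexppos]
      _ = |v' 0 + ∫ t in (0:ℝ)..ξ, g t| := by rw [hGξ]
      _ ≤ _ := abs_add_le _ _
  have hAξ_lb : abar * ξ ≤ A ξ := by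
    have h1 := hA_lb 0 h0mem ξ hξ hξ.1
    rw [hA0] at h1
    linarith only [h1]
  have hexp_cmp : exp (-(A ξ / ε)) ≤ exp (-(abar * ξ) / ε) := by
    apply Real.exp_le_exp.mpr
    rw [neg_div]
    apply neg_le_neg
    gcongr
  have hterm1 : |v' 0| / exp (A ξ / ε) ≤ (C₃ / ε) * exp (-(abar * ξ) / ε) := by
    rw [div_eq_mul_inv, ← Real.exp_neg]
    exact mul_le_mul hv'0 hexp_cmp (exp_pos _).le (div_nonneg hC30 hε.le)
  have hterm2 : |∫ t in (0:ℝ)..ξ, g t| / exp (A ξ / ε) ≤ MF / abar := by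
    have h1 : |∫ t in (0:ℝ)..ξ, g t| ≤ ∫ t in (0:ℝ)..ξ, |g t| :=
      abs_integral_le_integral_abs hξ.1
    have hgint' : IntervalIntegrable (fun t => |g t|) volume 0 ξ := hgint.abs
    have hrhsC : Continuous (fun t : ℝ => (MF / ε) * exp (abar * (t - ξ) / ε)) := by
      fun_prop
    have hrhsint : IntervalIntegrable (fun t => (MF / ε) * exp (abar * (t - ξ) / ε))
        volume 0 ξ := hrhsC.intervalIntegrable 0 ξ
    have h2 : (∫ t in (0:ℝ)..ξ, |g t|) * exp (-(A ξ / ε))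
        = ∫ t in (0:ℝ)..ξ, |g t| * exp (-(A ξ / ε)) := by
      rw [intervalIntegral.integral_mul_const]
    have h3 : ∫ t in (0:ℝ)..ξ, |g t| * exp (-(A ξ / ε))
        ≤ ∫ t in (0:ℝ)..ξ, (MF / ε) * exp (abar * (t - ξ) / ε) := by
      apply integral_mono_on hξ.1 (hgint'.mul_const _) hrhsint
      intro t htm
      have htT : t ∈ Icc (0:ℝ) T := hsubξ htm
      rw [hgap t, abs_mul, abs_of_pos (exp_pos _), abs_div, abs_of_pos hε,
        mul_assoc, ← Real.exp_add]
      have harg : A t / ε + -(A ξ / ε) ≤ abar * (t - ξ) / ε := by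
        have h4 := hA_lb t htT ξ hξ htm.2
        have h5 : A t / ε + -(A ξ / ε) = (A t - A ξ) / ε := by ring
        rw [h5]
        gcongr
        linarith only [h4]
      refine mul_le_mul ?_ (Real.exp_le_exp.mpr harg) (exp_pos _).le (div_nonneg hMF0 hε.le)
      gcongr
      exact hFtM t htT
    have h6 : ∫ t in (0:ℝ)..ξ, (MF / ε) * exp (abar * (t - ξ) / ε)
        = (MF / abar) * (1 - exp (abar * (0 - ξ) / ε)) := by
      have hH : ∀ t ∈ uIcc (0:ℝ) ξ,
          HasDerivAt (fun u => (MF / abar) * exp (abar * (u - ξ) / ε))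
          ((MF / ε) * exp (abar * (t - ξ) / ε)) t := by
        intro t _
        have h7 : HasDerivAt (fun u : ℝ => abar * (u - ξ) / ε) (abar / ε) t := by
          have h8 := (((hasDerivAt_id t).sub_const ξ).const_mul abar).div_const ε
          simpa using h8
        have h9 : HasDerivAt (fun u => (MF / abar) * exp (abar * (u - ξ) / ε)) _ t :=
          (h7.exp).const_mul (MF / abar)
        convert h9 using 1
        field_simp
      rw [integral_eq_sub_of_hasDerivAt hH hrhsint]
      have h10 : abar * (ξ - ξ) / ε = 0 := by ring
      rw [h10, Real.exp_zero]
      ring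
    have h11 : (MF / abar) * (1 - exp (abar * (0 - ξ) / ε)) ≤ MF / abar := by
      have h12 := exp_pos (abar * (0 - ξ) / ε)
      have h13 : 0 ≤ (MF / abar) * exp (abar * (0 - ξ) / ε) :=
        mul_nonneg (div_nonneg hMF0 habar.le) h12.le
      have h14 : (MF / abar) * (1 - exp (abar * (0 - ξ) / ε))
          = MF / abar - (MF / abar) * exp (abar * (0 - ξ) / ε) := by ring
      linarith only [h13, h14]
    calc |∫ t in (0:ℝ)..ξ, g t| / exp (A ξ / ε)
        ≤ (∫ t in (0:ℝ)..ξ, |g t|) / exp (A ξ / ε) := by gcongr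
      _ = (∫ t in (0:ℝ)..ξ, |g t|) * exp (-(A ξ / ε)) := by
          rw [div_eq_mul_inv, ← Real.exp_neg]
      _ = ∫ t in (0:ℝ)..ξ, |g t| * exp (-(A ξ / ε)) := h2
      _ ≤ ∫ t in (0:ℝ)..ξ, (MF / ε) * exp (abar * (t - ξ) / ε) := h3
      _ = (MF / abar) * (1 - exp (abar * (0 - ξ) / ε)) := h6
      _ ≤ MF / abar := h11
  calc |v' ξ| ≤ (|v' 0| + |∫ t in (0:ℝ)..ξ, g t|) / exp (A ξ / ε) := habs1
    _ = |v' 0| / exp (A ξ / ε) + |∫ t in (0:ℝ)..ξ, g t| / exp (A ξ / ε) := add_div _ _ _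
    _ ≤ (C₃ / ε) * exp (-(abar * ξ) / ε) + MF / abar := add_le_add hterm1 hterm2
    _ ≤ (C₃ + MF / abar + 1) * (1 + ε⁻¹ * exp (-(abar * ξ) / ε)) := by
        have hE : (0:ℝ) ≤ exp (-(abar * ξ) / ε) := (exp_pos _).le
        have hεinv : (0:ℝ) ≤ ε⁻¹ := inv_nonneg.mpr hε.le
        have hx : (0:ℝ) ≤ ε⁻¹ * exp (-(abar * ξ) / ε) := mul_nonneg hεinv hE
        have hm : (0:ℝ) ≤ MF / abar := div_nonneg hMF0 habar.le
        have hce : C₃ / ε * exp (-(abar * ξ) / ε)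
            = C₃ * (ε⁻¹ * exp (-(abar * ξ) / ε)) := by
          rw [div_eq_mul_inv]; ring
        rw [hce]
        have h1 : C₃ * (ε⁻¹ * exp (-(abar * ξ) / ε))
            ≤ (C₃ + MF / abar + 1) * (ε⁻¹ * exp (-(abar * ξ) / ε)) :=
          mul_le_mul_of_nonneg_right (by linarith only [hm]) hx
        have h2 : (C₃ + MF / abar + 1) * (1 + ε⁻¹ * exp (-(abar * ξ) / ε))
            = (C₃ + MF / abar + 1)
              + (C₃ + MF / abar + 1) * (ε⁻¹ * exp (-(abar * ξ) / ε)) := by ring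
        linarith only [h1, h2, hC30, hm]
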